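/- Let u : ℝ^p → ℝ^q be affine, u(x) = γx + δ, let X = ∩_{i=1}^q {x : u_i(x) ≥ 0} be nonempty, and let d : ℝ^p → ℝ, d(x) = ax + b be affine. If d(x) ≥ 0 for all x ∈ X, then there exist c ≥ 0 and λ ∈ ℝ^q with λ_i ≥ 0 for all i such that d(x) = Σ_i λ_i u_i(x) + c for all x ∈ ℝ^p. -/

import Mathlib

open Matrix

section AffineFarkasAux

open Topology RealInnerProductSpace

set_option linter.unusedSectionVars false

set_option linter.unusedSectionVars false

variable {n : ℕ} {ι : Type*} [Fintype ι] [DecidableEq ι]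

def coneIn (v : ι → EuclideanSpace ℝ (Fin n)) (s : Finset ι) : Set (EuclideanSpace ℝ (Fin n)) :=
  {x | ∃ l : ι → ℝ, (∀ i, 0 ≤ l i) ∧ (∀ i ∉ s, l i = 0) ∧ ∑ i, l i • v i = x}

lemma sum_eq_sum_coe (v : ι → EuclideanSpace ℝ (Fin n)) (s : Finset ι) (l : ι → ℝ)
    (hls : ∀ i ∉ s, l i = 0) : ∑ i : ι, l i • v i = ∑ i : s, (l i) • v i := by
  rw [Finset.sum_coe_sort s (fun i => l i • v i)]
  exact (Finset.sum_subset (Finset.subset_univ s) fun i _ hi => by rw [hls i hi, zero_smul]).symm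

lemma coneIn_reduce (v : ι → EuclideanSpace ℝ (Fin n)) (s : Finset ι)
    (x : EuclideanSpace ℝ (Fin n)) (hx : x ∈ coneIn v s)
    (G : ι → ℝ) (hGs : ∀ i ∉ s, G i = 0) (hGsum : ∑ i, G i • v i = 0)
    (j : ι) (hGj : 0 < G j) : ∃ t : Finset ι, t ⊂ s ∧ x ∈ coneIn v t := by
  obtain ⟨l, hl0, hls, hlx⟩ := hx
  have hjs : j ∈ s := by
    by_contra hj; rw [hGs j hj] at hGj; exact lt_irrefl 0 hGj
  set P : Finset ι := s.filter (fun i => 0 < G i) with hP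
  have hPne : P.Nonempty := ⟨j, by simp [hP, hjs, hGj]⟩
  obtain ⟨i₀, hi₀P, hi₀min⟩ := Finset.exists_min_image P (fun i => l i / G i) hPne
  have hi₀s : i₀ ∈ s := (Finset.mem_filter.mp hi₀P).1
  have hGi₀ : 0 < G i₀ := (Finset.mem_filter.mp hi₀P).2
  set c : ℝ := l i₀ / G i₀ with hc
  have hc0 : 0 ≤ c := div_nonneg (hl0 i₀) hGi₀.le
  refine ⟨s.erase i₀, Finset.erase_ssubset hi₀s, fun i => l i - c * G i, ?_, ?_, ?_⟩
  · intro i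
    show 0 ≤ l i - c * G i
    by_cases hGi : 0 < G i
    · by_cases his : i ∈ s
      · have hiP : i ∈ P := Finset.mem_filter.mpr ⟨his, hGi⟩
        have := hi₀min i hiP
        have : c * G i ≤ l i := (le_div_iff₀ hGi).mp this
        linarith
      · rw [hGs i his]; simpa using hl0 i
    · push_neg at hGi
      have : c * G i ≤ 0 := mul_nonpos_of_nonneg_of_nonpos hc0 hGi
      have := hl0 i
      linarith
  · intro i hi
    show l i - c * G i = 0
    rcases Finset.mem_erase.not.mp hi with h
    push_neg at h
    by_cases hii : i = i₀
    · subst hii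
      rw [hc, div_mul_cancel₀ _ (ne_of_gt hGi₀), sub_self]
    · have his : i ∉ s := h hii
      rw [hls i his, hGs i his]; ring
  · have : ∑ i, (l i - c * G i) • v i
        = ∑ i, l i • v i - c • ∑ i, G i • v i := by
      rw [Finset.smul_sum, ← Finset.sum_sub_distrib]
      congr 1; funext i
      rw [sub_smul, smul_smul]
    rw [this, hGsum, smul_zero, sub_zero, hlx]

lemma coneIn_caratheodory (v : ι → EuclideanSpace ℝ (Fin n)) (s : Finset ι) :
    ∀ x ∈ coneIn v s, ∃ t : Finset ι,
      LinearIndependent ℝ (fun i : t => v i) ∧ x ∈ coneIn v t := by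
  induction s using Finset.strongInduction with
  | _ s ih =>
    intro x hx
    by_cases hli : LinearIndependent ℝ (fun i : s => v i)
    · exact ⟨s, hli, hx⟩
    · obtain ⟨g, hg0, j, hj⟩ := Fintype.not_linearIndependent_iff.mp hli
      set G : ι → ℝ := fun i => if h : i ∈ s then g ⟨i, h⟩ else 0 with hG
      have hGs : ∀ i ∉ s, G i = 0 := fun i hi => by simp [hG, hi]
      have hGsum : ∑ i, G i • v i = 0 := by
        rw [sum_eq_sum_coe v s G hGs]
        rw [← hg0]
        congr 1; funext i; simp [hG, i.2]
      have hGj : G (j : ι) = g j := by simp [hG, j.2]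
      rcases lt_or_gt_of_ne hj with hneg | hpos
      · obtain ⟨t, hts, hxt⟩ := coneIn_reduce v s x hx (-G)
          (fun i hi => by simp [hGs i hi])
          (by
            have h1 : ∑ i, (-G) i • v i = -∑ i, G i • v i := by
              simp [neg_smul]
            rw [h1, hGsum, neg_zero])
          j (by rw [Pi.neg_apply, hGj]; linarith)
        obtain ⟨t', ht'⟩ := ih t hts x hxt
        exact ⟨t', ht'⟩
      · obtain ⟨t, hts, hxt⟩ := coneIn_reduce v s x hx G hGs hGsum j
          (by rw [hGj]; exact hpos)
        obtain ⟨t', ht'⟩ := ih t hts x hxt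
        exact ⟨t', ht'⟩

lemma coneIn_isClosed_of_li (v : ι → EuclideanSpace ℝ (Fin n)) (s : Finset ι)
    (h : LinearIndependent ℝ (fun i : s => v i)) : IsClosed (coneIn v s) := by
  set T := Fintype.linearCombination ℝ (fun i : s => v i) with hT
  have hker : LinearMap.ker T = ⊥ := by
    rw [LinearMap.ker_eq_bot']
    intro g hg
    have := Fintype.linearIndependent_iff.mp h g
      (by simpa [hT, Fintype.linearCombination_apply] using hg)
    funext i; exact this i
  have hce : IsClosedEmbedding T := LinearMap.isClosedEmbedding_of_injective hker
  have himg : coneIn v s = T '' {g : s → ℝ | ∀ i, 0 ≤ g i} := by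
    ext x
    constructor
    · rintro ⟨l, hl0, hls, rfl⟩
      refine ⟨fun i => l i, fun i => hl0 i, ?_⟩
      rw [hT, Fintype.linearCombination_apply]
      exact (sum_eq_sum_coe v s l hls).symm
    · rintro ⟨g, hg, rfl⟩
      refine ⟨fun i => if h : i ∈ s then g ⟨i, h⟩ else 0, ?_, ?_, ?_⟩
      · intro i
        by_cases h : i ∈ s
        · simpa [h] using hg ⟨i, h⟩
        · simp [h]
      · intro i hi; simp [hi]
      · rw [sum_eq_sum_coe v s _ (fun i hi => by simp [hi]), hT,
          Fintype.linearCombination_apply]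
        congr 1
        funext i
        simp [i.2]
  rw [himg]
  refine hce.isClosedMap _ ?_
  have : {g : s → ℝ | ∀ i, 0 ≤ g i} = ⋂ i, {g : s → ℝ | 0 ≤ g i} := by
    ext g; simp [Set.mem_iInter]
  rw [this]
  exact isClosed_iInter fun i => isClosed_le continuous_const (continuous_apply i)

lemma coneIn_isClosed_univ {n : ℕ} {ι : Type*} [Fintype ι] [DecidableEq ι]
    (v : ι → EuclideanSpace ℝ (Fin n)) : IsClosed (coneIn v Finset.univ) := by
  have : coneIn v Finset.univ =
      ⋃ t : {t : Finset ι // LinearIndependent ℝ (fun i : t => v i)}, coneIn v t := by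
    ext x
    constructor
    · intro hx
      obtain ⟨t, hli, hxt⟩ := coneIn_caratheodory v Finset.univ x hx
      exact Set.mem_iUnion.mpr ⟨⟨t, hli⟩, hxt⟩
    · intro hx
      obtain ⟨⟨t, hli⟩, hxt⟩ := Set.mem_iUnion.mp hx
      obtain ⟨l, hl0, _, hlx⟩ := hxt
      exact ⟨l, hl0, fun i hi => absurd (Finset.mem_univ i) hi, hlx⟩
  rw [this]
  exact isClosed_iUnion_of_finite fun t => coneIn_isClosed_of_li v t t.2

lemma farkas_cone {n : ℕ} {ι : Type*} [Fintype ι] [DecidableEq ι]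
    (v : ι → EuclideanSpace ℝ (Fin n)) (z : EuclideanSpace ℝ (Fin n))
    (h : ∀ y : EuclideanSpace ℝ (Fin n), (∀ i, 0 ≤ ⟪v i, y⟫) → 0 ≤ ⟪z, y⟫) :
    ∃ l : ι → ℝ, (∀ i, 0 ≤ l i) ∧ ∑ i, l i • v i = z := by
  set K : ConvexCone ℝ (EuclideanSpace ℝ (Fin n)) :=
    { carrier := coneIn v Finset.univ
      smul_mem' := by
        rintro c hc x ⟨l, hl0, -, hlx⟩
        refine ⟨fun i => c * l i, fun i => mul_nonneg hc.le (hl0 i),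
          fun i hi => absurd (Finset.mem_univ i) hi, ?_⟩
        rw [← hlx, Finset.smul_sum]
        congr 1; funext i; rw [smul_smul]
      add_mem' := by
        rintro x ⟨l, hl0, -, hlx⟩ y ⟨m, hm0, -, hmx⟩
        refine ⟨fun i => l i + m i, fun i => add_nonneg (hl0 i) (hm0 i),
          fun i hi => absurd (Finset.mem_univ i) hi, ?_⟩
        rw [← hlx, ← hmx, ← Finset.sum_add_distrib]
        congr 1; funext i; rw [add_smul] } with hK
  have hne : (K : Set (EuclideanSpace ℝ (Fin n))).Nonempty :=
    ⟨0, ⟨fun _ => 0, fun i => le_refl 0, fun i _ => rfl, by simp⟩⟩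
  have hcl : IsClosed (K : Set (EuclideanSpace ℝ (Fin n))) := coneIn_isClosed_univ v
  have hvK : ∀ i, v i ∈ K := by
    intro i
    refine ⟨fun k => if k = i then 1 else 0, fun k => by positivity,
      fun k hk => absurd (Finset.mem_univ k) hk, ?_⟩
    simp [ite_smul]
  have hz : z ∈ (K : Set (EuclideanSpace ℝ (Fin n))) := by
    by_contra hzK
    obtain ⟨f, u, hfK, hfz⟩ := geometric_hahn_banach_closed_point K.convex hcl hzK
    have h0K : (0 : EuclideanSpace ℝ (Fin n)) ∈ (K : Set (EuclideanSpace ℝ (Fin n))) :=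
      ⟨fun _ => 0, fun i => le_refl 0, fun i _ => rfl, by simp⟩
    have hu : 0 < u := by have := hfK 0 h0K; simpa using this
    have hf0 : ∀ x ∈ (K : Set (EuclideanSpace ℝ (Fin n))), f x ≤ 0 := by
      intro x hx; by_contra hpos; push_neg at hpos
      have := hfK ((u / f x) • x) (K.smul_mem (div_pos hu hpos) hx)
      rw [map_smul, smul_eq_mul, div_mul_cancel₀ _ hpos.ne'] at this; linarith
    set y := (InnerProductSpace.toDual ℝ (EuclideanSpace ℝ (Fin n))).symm (-f)
    have hy : ∀ x, ⟪x, y⟫ = -f x := by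
      intro x; rw [real_inner_comm, InnerProductSpace.toDual_symm_apply]; rfl
    have := h y (fun i => by rw [hy]; linarith [hf0 _ (hvK i)])
    rw [hy] at this; linarith
  obtain ⟨l, hl0, -, hlx⟩ := hz
  exact ⟨l, hl0, hlx⟩

def toE {m : ℕ} (f : Fin m → ℝ) : EuclideanSpace ℝ (Fin m) := WithLp.toLp 2 f

@[simp] lemma toE_apply {m : ℕ} (f : Fin m → ℝ) (i : Fin m) : toE f i = f i := rfl

lemma inner_snoc {p : ℕ} (u : Fin p → ℝ) (c : ℝ) (y : EuclideanSpace ℝ (Fin (p+1))) :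
    ⟪toE (Fin.snoc u c), y⟫
      = u ⬝ᵥ (fun j => y j.castSucc) + c * y (Fin.last p) := by
  simp [PiLp.inner_apply, RCLike.inner_apply, Fin.sum_univ_castSucc, dotProduct, mul_comm]

end AffineFarkasAux

open RealInnerProductSpace in
/-- Affine Farkas lemma: if the affine function `d(x) = a·x + b` is nonnegative on the
nonempty polyhedron `X = ∩ᵢ {x : uᵢ(x) = γᵢ·x + δᵢ ≥ 0}`, then `d = ∑ᵢ λᵢ uᵢ + c` for
some `λᵢ ≥ 0` and `c ≥ 0`. -/
theorem stmt1 (p q : ℕ) (γ : Fin q → Fin p → ℝ) (δ : Fin q → ℝ)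
    (a : Fin p → ℝ) (b : ℝ)
    (hne : ∃ x : Fin p → ℝ, ∀ i, 0 ≤ γ i ⬝ᵥ x + δ i)
    (hd : ∀ x : Fin p → ℝ, (∀ i, 0 ≤ γ i ⬝ᵥ x + δ i) → 0 ≤ a ⬝ᵥ x + b) :
    ∃ (c : ℝ) (l : Fin q → ℝ), 0 ≤ c ∧ (∀ i, 0 ≤ l i) ∧
      ∀ x : Fin p → ℝ, a ⬝ᵥ x + b = ∑ i, l i * (γ i ⬝ᵥ x + δ i) + c := by
  classical
  obtain ⟨x₀, hx₀⟩ := hne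
  set w : Option (Fin q) → EuclideanSpace ℝ (Fin (p+1)) :=
    fun o => Option.elim o (toE (Fin.snoc 0 1)) (fun i => toE (Fin.snoc (γ i) (δ i))) with hw
  have hwnone : w none = toE (Fin.snoc 0 1) := rfl
  have hwsome : ∀ i, w (some i) = toE (Fin.snoc (γ i) (δ i)) := fun _ => rfl
  set z : EuclideanSpace ℝ (Fin (p+1)) := toE (Fin.snoc a b) with hz
  have key : ∀ y : EuclideanSpace ℝ (Fin (p+1)), (∀ o, 0 ≤ ⟪w o, y⟫) → 0 ≤ ⟪z, y⟫ := by
    intro y hy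
    set x : Fin p → ℝ := fun j => y j.castSucc with hx
    set t : ℝ := y (Fin.last p) with ht
    have hty : 0 ≤ t := by
      have h0 := hy none
      rw [hwnone, inner_snoc] at h0
      simpa [zero_dotProduct] using h0
    have hi : ∀ i, 0 ≤ γ i ⬝ᵥ x + δ i * t := by
      intro i
      have h0 := hy (some i)
      rw [hwsome, inner_snoc] at h0
      exact h0
    rw [hz, inner_snoc, ← hx, ← ht]
    rcases eq_or_lt_of_le hty with h0 | hpos
    · have hi' : ∀ i, 0 ≤ γ i ⬝ᵥ x := by
        intro i; have := hi i; rw [← h0] at this; simpa using this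
      by_contra hax
      push_neg at hax
      have haxx : a ⬝ᵥ x < 0 := by rw [← h0] at hax; simpa using hax
      have hb0 : 0 ≤ a ⬝ᵥ x₀ + b := hd x₀ hx₀
      set s : ℝ := (a ⬝ᵥ x₀ + b + 1) / (-(a ⬝ᵥ x)) with hs
      have hs0 : 0 ≤ s := div_nonneg (by linarith) (by linarith)
      have h1 : ∀ i, 0 ≤ γ i ⬝ᵥ (x₀ + s • x) + δ i := by
        intro i
        rw [dotProduct_add, dotProduct_smul, smul_eq_mul]
        have h2 : 0 ≤ s * (γ i ⬝ᵥ x) := mul_nonneg hs0 (hi' i)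
        have h3 := hx₀ i
        linarith
      have h2 := hd _ h1
      rw [dotProduct_add, dotProduct_smul, smul_eq_mul] at h2
      have hne0 : a ⬝ᵥ x ≠ 0 := ne_of_lt haxx
      have h4 : s * (a ⬝ᵥ x) = -(a ⬝ᵥ x₀ + b + 1) := by
        rw [hs, div_neg, neg_mul, div_mul_cancel₀ _ hne0]
      linarith
    · have htne : t ≠ 0 := ne_of_gt hpos
      have h1 : ∀ i, 0 ≤ γ i ⬝ᵥ (t⁻¹ • x) + δ i := by
        intro i
        rw [dotProduct_smul, smul_eq_mul]
        have h3 : 0 ≤ t⁻¹ * (γ i ⬝ᵥ x + δ i * t) := mul_nonneg (inv_nonneg.mpr hty) (hi i)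
        rw [mul_add, mul_comm (δ i) t, ← mul_assoc, inv_mul_cancel₀ htne, one_mul] at h3
        exact h3
      have h2 := hd _ h1
      rw [dotProduct_smul, smul_eq_mul] at h2
      have h4 : 0 ≤ t * (t⁻¹ * (a ⬝ᵥ x) + b) := mul_nonneg hpos.le h2
      rw [mul_add, ← mul_assoc, mul_inv_cancel₀ htne, one_mul, mul_comm t b] at h4
      exact h4
  obtain ⟨l, hl0, hsum⟩ := farkas_cone w z key
  refine ⟨l none, fun i => l (some i), hl0 none, fun i => hl0 (some i), ?_⟩
  intro x
  set Y : EuclideanSpace ℝ (Fin (p+1)) := toE (Fin.snoc x 1) with hY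
  have hxY : (fun j => Y j.castSucc) = x := by funext j; simp [hY]
  have hYl : Y (Fin.last p) = 1 := by simp [hY]
  have h1 : ⟪z, Y⟫ = a ⬝ᵥ x + b := by rw [hz, inner_snoc, hxY, hYl, mul_one]
  have h2 : ⟪∑ o, l o • w o, Y⟫ = ∑ o, l o * ⟪w o, Y⟫ := by
    rw [sum_inner]; congr 1; funext o; rw [real_inner_smul_left]
  rw [hsum] at h2
  rw [← h1, h2, Fintype.sum_option]
  have h3 : ⟪w none, Y⟫ = 1 := by
    rw [hwnone, inner_snoc, hYl, zero_dotProduct]; ring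
  have h4 : ∀ i, ⟪w (some i), Y⟫ = γ i ⬝ᵥ x + δ i := by
    intro i
    rw [hwsome, inner_snoc, hxY, hYl, mul_one]
  rw [h3]
  simp only [h4]
  ring
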